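/- There exists a universal constant C > 0 such that for all 0 ≤ L ≤ U ≤ ∞ and w > 0, ∫_L^U φ(z) dz ≤ C·max{1, 1/w}·∫_L^{min(U, L+w)} φ(z) dz, where φ is the standard Gaussian density. -/

import Mathlib

open MeasureTheory Real

/-- Standard Gaussian density on `ℝ`. -/
noncomputable def stdGauss (z : ℝ) : ℝ := (Real.sqrt (2 * π))⁻¹ * Real.exp (-z ^ 2 / 2)

lemma stdGauss_pos (z : ℝ) : 0 < stdGauss z := by
  unfold stdGauss
  have : (0:ℝ) < 2 * π := by positivity
  positivity

lemma stdGauss_nonneg (z : ℝ) : 0 ≤ stdGauss z := (stdGauss_pos z).le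

lemma stdGauss_integrable : Integrable stdGauss := by
  have h : Integrable (fun z : ℝ => Real.exp (-(1/2 : ℝ) * z ^ 2)) :=
    integrable_exp_neg_mul_sq (by norm_num)
  have := h.const_mul (Real.sqrt (2 * π))⁻¹
  refine this.congr (Filter.Eventually.of_forall fun z => ?_)
  unfold stdGauss
  ring_nf

lemma stdGauss_integral_eq_one : ∫ z : ℝ, stdGauss z = 1 := by
  have h : ∫ z : ℝ, Real.exp (-(1/2 : ℝ) * z ^ 2) = Real.sqrt (π / (1/2)) :=
    integral_gaussian (1/2)
  have h2 : ∫ z : ℝ, stdGauss z = (Real.sqrt (2 * π))⁻¹ * ∫ z : ℝ, Real.exp (-(1/2:ℝ) * z ^ 2) := by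
    rw [← integral_const_mul]
    congr 1 with z
    unfold stdGauss
    ring_nf
  rw [h2, h, show π / (1/2 : ℝ) = 2 * π by ring]
  have : Real.sqrt (2 * π) ≠ 0 := by
    have : (0:ℝ) < 2 * π := by positivity
    positivity
  field_simp

/-- tail bound -/
lemma stdGauss_tail (L : ℝ) (hL : 0 ≤ L) :
    ∫ z in Set.Ici L, stdGauss z ≤ 9 * stdGauss L / (1 + L) := by
  rcases le_or_gt L 1 with h1 | h1
  · -- small L : whole integral is 1
    have hle : ∫ z in Set.Ici L, stdGauss z ≤ 1 := by
      rw [← stdGauss_integral_eq_one]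
      exact setIntegral_le_integral stdGauss_integrable
        (Filter.Eventually.of_forall stdGauss_nonneg)
    refine hle.trans ?_
    have hsq : Real.sqrt (2 * π) ≤ 2.51 := by
      rw [show (2.51:ℝ) = Real.sqrt (2.51 ^ 2) from (Real.sqrt_sq (by norm_num)).symm]
      exact Real.sqrt_le_sqrt (by nlinarith [Real.pi_lt_d2])
    have hsqpos : (0:ℝ) < Real.sqrt (2 * π) := Real.sqrt_pos.mpr (by positivity)
    have hexp : Real.exp (1/2 : ℝ) ≤ 1.649 := by
      have h := Real.exp_one_lt_d9
      have hsq2 : Real.exp (1/2 : ℝ) * Real.exp (1/2 : ℝ) = Real.exp 1 := by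
        rw [← Real.exp_add]; norm_num
      nlinarith [Real.exp_pos (1/2 : ℝ)]
    have hmono : Real.exp (-(1:ℝ)/2) ≤ Real.exp (-L ^ 2 / 2) := by
      apply Real.exp_le_exp.mpr; nlinarith
    have hkey : Real.sqrt (2 * π) * Real.exp (1/2 : ℝ) ≤ 4.5 := by
      nlinarith [Real.exp_pos (1/2 : ℝ)]
    rw [le_div_iff₀ (by linarith : (0:ℝ) < 1 + L)]
    unfold stdGauss
    have hinv : Real.exp (-(1:ℝ)/2) = (Real.exp (1/2 : ℝ))⁻¹ := by
      rw [← Real.exp_neg]; norm_num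
    have h9 : (2:ℝ) ≤ 9 * ((Real.sqrt (2 * π))⁻¹ * Real.exp (-(1:ℝ)/2)) := by
      rw [hinv]
      rw [show 9 * ((Real.sqrt (2*π))⁻¹ * (Real.exp (1/2:ℝ))⁻¹)
          = 9 / (Real.sqrt (2*π) * Real.exp (1/2:ℝ)) by field_simp]
      rw [le_div_iff₀ (by positivity)]
      nlinarith
    have : 9 * ((Real.sqrt (2 * π))⁻¹ * Real.exp (-(1:ℝ)/2))
        ≤ 9 * ((Real.sqrt (2 * π))⁻¹ * Real.exp (-L ^ 2 / 2)) := by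
      have : (0:ℝ) ≤ (Real.sqrt (2 * π))⁻¹ := by positivity
      nlinarith
    nlinarith
  · -- large L : exponential comparison
    have hLpos : (0:ℝ) < L := by linarith
    have hbound : ∀ z ∈ Set.Ioi L, stdGauss z
        ≤ (Real.sqrt (2 * π))⁻¹ * (Real.exp (L ^ 2 / 2) * Real.exp (-L * z)) := by
      intro z hz
      have hz' : L < z := hz
      unfold stdGauss
      rw [← Real.exp_add]
      have : (0:ℝ) ≤ (Real.sqrt (2 * π))⁻¹ := by positivity
      have hexp : Real.exp (-z ^ 2 / 2) ≤ Real.exp (L ^ 2 / 2 + -L * z) := by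
        apply Real.exp_le_exp.mpr; nlinarith [sq_nonneg (z - L)]
      nlinarith
    have hInt : IntegrableOn (fun z : ℝ =>
        (Real.sqrt (2 * π))⁻¹ * (Real.exp (L ^ 2 / 2) * Real.exp (-L * z))) (Set.Ioi L) :=
      ((exp_neg_integrableOn_Ioi L hLpos).const_mul _).const_mul _
    have hIci : ∫ z in Set.Ici L, stdGauss z = ∫ z in Set.Ioi L, stdGauss z :=
      integral_Ici_eq_integral_Ioi
    have hmono : ∫ z in Set.Ioi L, stdGauss z
        ≤ ∫ z in Set.Ioi L,
            (Real.sqrt (2 * π))⁻¹ * (Real.exp (L ^ 2 / 2) * Real.exp (-L * z)) :=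
      setIntegral_mono_on stdGauss_integrable.integrableOn hInt measurableSet_Ioi hbound
    have hexpint : ∫ z in Set.Ioi L, Real.exp (-L * z) = Real.exp (-L * L) / L := by
      have hD : ∀ x ∈ Set.Ioi L,
          HasDerivAt (fun z => -Real.exp (-L * z) / L) (Real.exp (-L * x)) x := by
        intro x _
        have : HasDerivAt (fun z : ℝ => -L * z) (-L) x := by
          simpa using (hasDerivAt_id x).const_mul (-L)
        have := (this.exp.neg).div_const L
        rw [show Real.exp (-L * x) = -(Real.exp (-L * x) * -L) / L by field_simp]
        exact this
      have hT : Filter.Tendsto (fun z => -Real.exp (-L * z) / L) Filter.atTop (nhds 0) := by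
        have : Filter.Tendsto (fun z : ℝ => Real.exp (-L * z)) Filter.atTop (nhds 0) :=
          Real.tendsto_exp_atBot.comp (Filter.tendsto_id.const_mul_atTop_of_neg (by linarith))
        simpa using (this.neg).div_const L
      have hc : Continuous fun z : ℝ => -Real.exp (-L * z) / L := by fun_prop
      have := integral_Ioi_of_hasDerivAt_of_tendsto
        hc.continuousWithinAt hD (exp_neg_integrableOn_Ioi L hLpos) hT
      rw [this]
      field_simp
      ring
    have hval : ∫ z in Set.Ioi L,
        (Real.sqrt (2 * π))⁻¹ * (Real.exp (L ^ 2 / 2) * Real.exp (-L * z))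
        = stdGauss L / L := by
      rw [integral_const_mul, integral_const_mul, hexpint]
      unfold stdGauss
      rw [div_eq_mul_inv (Real.exp (-L * L)) L, ← mul_assoc (Real.exp (L ^ 2 / 2)),
        ← Real.exp_add, show L ^ 2 / 2 + -L * L = -L ^ 2 / 2 by ring]
      ring
    have hfinal : stdGauss L / L ≤ 9 * stdGauss L / (1 + L) := by
      rw [div_le_div_iff₀ hLpos (by linarith)]
      nlinarith [stdGauss_pos L]
    calc ∫ z in Set.Ici L, stdGauss z
        = ∫ z in Set.Ioi L, stdGauss z := hIci
      _ ≤ _ := hmono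
      _ = stdGauss L / L := hval
      _ ≤ _ := hfinal

/-- segment lower bound -/
lemma stdGauss_segment (L δ : ℝ) (hL : 0 ≤ L) (hδ : 0 < δ) (hδ1 : δ ≤ 1) (hLδ : L * δ ≤ 1) :
    δ * (stdGauss L * Real.exp (-(3:ℝ)/2)) ≤ ∫ z in Set.Icc L (L + δ), stdGauss z := by
  have hpt : ∀ z ∈ Set.Icc L (L + δ), stdGauss L * Real.exp (-(3:ℝ)/2) ≤ stdGauss z := by
    intro z hz
    obtain ⟨hz1, hz2⟩ := hz
    unfold stdGauss
    rw [mul_assoc, ← Real.exp_add]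
    have : (0:ℝ) ≤ (Real.sqrt (2 * π))⁻¹ := by positivity
    have hexp : Real.exp (-L ^ 2 / 2 + -(3:ℝ)/2) ≤ Real.exp (-z ^ 2 / 2) := by
      apply Real.exp_le_exp.mpr
      nlinarith
    nlinarith
  have hconst : ∫ _z in Set.Icc L (L + δ), (stdGauss L * Real.exp (-(3:ℝ)/2))
      = δ * (stdGauss L * Real.exp (-(3:ℝ)/2)) := by
    rw [setIntegral_const, measureReal_def, Real.volume_Icc, smul_eq_mul]
    rw [show L + δ - L = δ by ring, ENNReal.toReal_ofReal hδ.le]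
  rw [← hconst]
  refine setIntegral_mono_on ?_ stdGauss_integrable.integrableOn measurableSet_Icc hpt
  exact integrableOn_const (by rw [Real.volume_Icc]; exact ENNReal.ofReal_ne_top)

/-- **Gaussian interval mass bound** (Lemma): there is a universal constant `C > 0` such
that for all `0 ≤ L ≤ U ≤ ∞` and `w > 0`, the Gaussian mass of `[L, U]` is at most
`C · max{1, 1/w}` times the mass of `{z ∈ [L, U] : z ≤ L + w}`. -/
theorem gaussian_initial_segment_bound :
    ∃ C : ℝ, 0 < C ∧ ∀ (L : ℝ) (U : EReal) (w : ℝ), 0 ≤ L → (L : EReal) ≤ U → 0 < w →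
      ∫ z in {z : ℝ | L ≤ z ∧ (z : EReal) ≤ U}, stdGauss z
        ≤ C * max 1 w⁻¹ *
          ∫ z in {z : ℝ | L ≤ z ∧ (z : EReal) ≤ U ∧ z ≤ L + w}, stdGauss z := by
  refine ⟨9 * Real.exp (3/2), by positivity, ?_⟩
  intro L U w hL hLU hw
  have hmax1 : (1:ℝ) ≤ max 1 w⁻¹ := le_max_left _ _
  have hmaxpos : (0:ℝ) < max 1 w⁻¹ := lt_of_lt_of_le one_pos hmax1
  by_cases hcase : U ≤ ((L + w : ℝ) : EReal)
  · have hset : {z : ℝ | L ≤ z ∧ (z : EReal) ≤ U ∧ z ≤ L + w}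
        = {z : ℝ | L ≤ z ∧ (z : EReal) ≤ U} := by
      ext z
      simp only [Set.mem_setOf_eq, and_congr_right_iff]
      intro _
      constructor
      · rintro ⟨h1, _⟩; exact h1
      · intro h1
        refine ⟨h1, ?_⟩
        have : (z : EReal) ≤ ((L + w : ℝ) : EReal) := le_trans h1 hcase
        exact_mod_cast this
    rw [hset]
    have hnn : 0 ≤ ∫ z in {z : ℝ | L ≤ z ∧ (z : EReal) ≤ U}, stdGauss z :=
      integral_nonneg fun z => stdGauss_nonneg z
    have hC : (1:ℝ) ≤ 9 * Real.exp (3/2) * max 1 w⁻¹ := by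
      have h1 : (1:ℝ) ≤ Real.exp (3/2) := by
        rw [show (1:ℝ) = Real.exp 0 from (Real.exp_zero).symm]
        exact Real.exp_le_exp.mpr (by norm_num)
      nlinarith
    nlinarith
  · push_neg at hcase
    set δ := min w (1 / (1 + L)) with hδdef
    have hLpos : (0:ℝ) < 1 + L := by linarith
    have hδpos : 0 < δ := lt_min hw (by positivity)
    have hδw : δ ≤ w := min_le_left _ _
    have hδinv : δ ≤ 1 / (1 + L) := min_le_right _ _
    have hδ1 : δ ≤ 1 := hδinv.trans (by rw [div_le_one hLpos]; linarith)
    have hLδ : L * δ ≤ 1 := by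
      have : L * δ ≤ L * (1 / (1 + L)) := by nlinarith
      refine this.trans ?_
      rw [mul_one_div, div_le_one hLpos]; linarith
    -- inclusion of segment into RHS set
    have hsub : Set.Icc L (L + δ) ⊆ {z : ℝ | L ≤ z ∧ (z : EReal) ≤ U ∧ z ≤ L + w} := by
      intro z hz
      obtain ⟨hz1, hz2⟩ := hz
      have hzw : z ≤ L + w := by linarith
      refine ⟨hz1, ?_, hzw⟩
      have : (z : EReal) ≤ ((L + w : ℝ) : EReal) := by exact_mod_cast hzw
      exact this.trans hcase.le
    have hI2 : δ * (stdGauss L * Real.exp (-(3:ℝ)/2))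
        ≤ ∫ z in {z : ℝ | L ≤ z ∧ (z : EReal) ≤ U ∧ z ≤ L + w}, stdGauss z := by
      refine (stdGauss_segment L δ hL hδpos hδ1 hLδ).trans ?_
      exact setIntegral_mono_set stdGauss_integrable.integrableOn
        (Filter.Eventually.of_forall stdGauss_nonneg) (HasSubset.Subset.eventuallyLE hsub)
    have hsub1 : {z : ℝ | L ≤ z ∧ (z : EReal) ≤ U} ⊆ Set.Ici L := fun z hz => hz.1
    have hI1 : ∫ z in {z : ℝ | L ≤ z ∧ (z : EReal) ≤ U}, stdGauss z
        ≤ 9 * stdGauss L / (1 + L) := by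
      refine le_trans ?_ (stdGauss_tail L hL)
      exact setIntegral_mono_set stdGauss_integrable.integrableOn
        (Filter.Eventually.of_forall stdGauss_nonneg) (HasSubset.Subset.eventuallyLE hsub1)
    have hkey : (1:ℝ) ≤ max 1 w⁻¹ * (δ * (1 + L)) := by
      rcases le_or_gt 1 (w * (1 + L)) with hwl | hwl
      · have hδeq : δ * (1 + L) = min (w * (1 + L)) 1 := by
          rw [hδdef, min_mul_of_nonneg _ _ hLpos.le, one_div, inv_mul_cancel₀ hLpos.ne']
        rw [hδeq, min_eq_right hwl, mul_one]
        exact hmax1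
      · have hw1 : w < 1 := by nlinarith
        have hδeq : δ = w := min_eq_left (by rw [le_div_iff₀ hLpos]; linarith)
        have hmaxeq : max 1 w⁻¹ = w⁻¹ := max_eq_right (by
          rw [le_inv_comm₀ one_pos hw]; simpa using hw1.le)
        rw [hδeq, hmaxeq, ← mul_assoc, inv_mul_cancel₀ hw.ne', one_mul]
        linarith
    have hφ : 0 < stdGauss L := stdGauss_pos L
    have hexppos : (0:ℝ) < Real.exp (3/2) := Real.exp_pos _
    calc ∫ z in {z : ℝ | L ≤ z ∧ (z : EReal) ≤ U}, stdGauss z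
        ≤ 9 * stdGauss L / (1 + L) := hI1
      _ ≤ 9 * stdGauss L * (max 1 w⁻¹ * δ) := by
          rw [div_le_iff₀ hLpos]
          nlinarith [mul_le_mul_of_nonneg_left hkey (by positivity : (0:ℝ) ≤ 9 * stdGauss L)]
      _ = 9 * Real.exp (3/2) * max 1 w⁻¹ * (δ * (stdGauss L * Real.exp (-(3:ℝ)/2))) := by
          rw [show (-(3:ℝ)/2) = -(3/2) by norm_num, Real.exp_neg]
          field_simp
      _ ≤ 9 * Real.exp (3/2) * max 1 w⁻¹ *
            ∫ z in {z : ℝ | L ≤ z ∧ (z : EReal) ≤ U ∧ z ≤ L + w}, stdGauss z := by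
          apply mul_le_mul_of_nonneg_left hI2 (by positivity)
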